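/- Let G be a finite group acting on a finite set X, let a ∈ X, let S ⊆ G·a be a subset with ε := #S/#(G·a), and let H = {g ∈ G : gS = S}. Suppose that for all g, g' in distinct cosets of H, #(gS ∩ g'S) < ε^4 · #(G·a). Then [G : H] ≤ 3/ε. -/

import Mathlib

open Pointwise

private lemma inter_biUnion_ncard_le {ι X : Type} [Fintype X] (B : Set X) (A : ι → Set X)
    (t : Finset ι) : (B ∩ ⋃ i ∈ t, A i).ncard ≤ ∑ i ∈ t, (B ∩ A i).ncard := by
  classical
  induction t using Finset.induction_on with
  | empty => simp
  | @insert a t ha ih =>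
    rw [Finset.set_biUnion_insert, Set.inter_union_distrib_left, Finset.sum_insert ha]
    exact le_trans (Set.ncard_union_le _ _) (by omega)

private lemma bonferroni {ι X : Type} [Fintype X] (A : ι → Set X) (m K : ℝ)
    (t : Finset ι)
    (hm : ∀ i ∈ t, m ≤ ((A i).ncard : ℝ))
    (hK : ∀ i ∈ t, ∀ j ∈ t, i ≠ j → ((A i ∩ A j).ncard : ℝ) ≤ K) :
    (t.card : ℝ) * m - (t.card : ℝ) * ((t.card : ℝ) - 1) / 2 * K
      ≤ ((⋃ i ∈ t, A i).ncard : ℝ) := by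
  classical
  revert hm hK
  induction t using Finset.induction_on with
  | empty => intro _ _; simp
  | @insert a t ha ih =>
    intro hm hK
    have ih' := ih (fun i hi => hm i (Finset.mem_insert_of_mem hi))
      (fun i hi j hj hij => hK i (Finset.mem_insert_of_mem hi) j (Finset.mem_insert_of_mem hj) hij)
    rw [Finset.set_biUnion_insert, Finset.card_insert_of_notMem ha]
    set U : Set X := ⋃ i ∈ t, A i with hU
    -- bound on the intersection with the union
    have hinter : ((A a ∩ U).ncard : ℝ) ≤ (t.card : ℝ) * K := by
      have h1 : ((A a ∩ U).ncard : ℝ) ≤ ∑ i ∈ t, ((A a ∩ A i).ncard : ℝ) := by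
        exact_mod_cast inter_biUnion_ncard_le (A a) A t
      have h2 : ∑ i ∈ t, ((A a ∩ A i).ncard : ℝ) ≤ ∑ i ∈ t, K :=
        Finset.sum_le_sum fun i hi => hK a (Finset.mem_insert_self a t) i
          (Finset.mem_insert_of_mem hi) (fun h => ha (h ▸ hi))
      simpa [Finset.sum_const, mul_comm] using h1.trans h2
    -- inclusion-exclusion for two sets
    have hie : ((A a).ncard : ℝ) + (U.ncard : ℝ) - ((A a ∩ U).ncard : ℝ)
        ≤ (((A a ∪ U).ncard : ℝ)) := by
      have := Set.ncard_union_add_ncard_inter (A a) U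
      have : ((A a ∪ U).ncard : ℝ) + ((A a ∩ U).ncard : ℝ)
          = ((A a).ncard : ℝ) + (U.ncard : ℝ) := by exact_mod_cast this
      linarith
    have hma := hm a (Finset.mem_insert_self a t)
    push_cast
    nlinarith [ih', hinter, hie, hma]

theorem index_le_of_small_translate_intersections
    (G X : Type) [Group G] [Fintype G] [MulAction G X] [Fintype X]
    (a : X) (S : Set X) (hSne : S.Nonempty) (hS : S ⊆ MulAction.orbit G a)
    (ε : ℝ) (hε : ε = (Nat.card ↥S : ℝ) / (Nat.card ↥(MulAction.orbit G a) : ℝ))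
    (H : Subgroup G) (hH : H = MulAction.stabilizer G S)
    (hyp : ∀ g g' : G, g⁻¹ * g' ∉ H →
      (Nat.card ↥(g • S ∩ g' • S) : ℝ)
        < ε ^ 4 * (Nat.card ↥(MulAction.orbit G a) : ℝ)) :
    (H.index : ℝ) ≤ 3 / ε := by
  classical
  set O : Set X := MulAction.orbit G a with hO
  have hcoe : ∀ s : Set X, (Nat.card ↥s : ℝ) = (s.ncard : ℝ) := by
    intro s; rw [Nat.card_coe_set_eq]
  set N : ℝ := (O.ncard : ℝ) with hN
  have hNpos : 0 < N := by
    have h : 0 < O.ncard := (Set.ncard_pos O.toFinite).mpr ⟨a, MulAction.mem_orbit_self a⟩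
    rw [hN]; exact_mod_cast h
  have hSpos : 0 < ((S.ncard : ℕ) : ℝ) := by
    have h : 0 < S.ncard := (Set.ncard_pos S.toFinite).mpr hSne
    exact_mod_cast h
  have hεeq : ε = (S.ncard : ℝ) / N := by rw [hε, hcoe, hcoe]
  have hε0 : 0 < ε := by rw [hεeq]; exact div_pos hSpos hNpos
  have hScard : (S.ncard : ℝ) = ε * N := by rw [hεeq]; field_simp
  have hε1 : ε ≤ 1 := by
    rw [hεeq, div_le_one hNpos, hN]
    exact_mod_cast Set.ncard_le_ncard hS O.toFinite
  have htrans : ∀ g : G, ((g • S).ncard : ℝ) = ε * N := by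
    intro g; rw [Set.ncard_smul_set, hScard]
  have hsub : ∀ g : G, g • S ⊆ O := by
    intro g
    have : g • S ⊆ g • O := Set.smul_set_mono hS
    rwa [hO, MulAction.smul_orbit] at this
  by_cases hcase : ε ≤ 11/20
  · -- small density case
    by_contra hcon
    push_neg at hcon
    set γ : ℕ := ⌈2/ε⌉₊ with hγ
    have hγ1 : 2/ε ≤ (γ : ℝ) := Nat.le_ceil _
    have hγ2 : (γ : ℝ) < 2/ε + 1 := Nat.ceil_lt_add_one (by positivity)
    have hinv : 1 ≤ 1/ε := by rw [le_div_iff₀ hε0]; linarith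
    have hγ3 : (γ : ℝ) ≤ 3/ε := by
      have : 2/ε + 1 ≤ 3/ε := by
        rw [div_add' _ _ _ (ne_of_gt hε0), div_le_div_iff₀ hε0 hε0]
        nlinarith
      linarith
    haveI : Fintype (G ⧸ H) := Fintype.ofFinite _
    have hidx : (H.index : ℝ) = (Fintype.card (G ⧸ H) : ℝ) := by
      rw [Subgroup.index, Nat.card_eq_fintype_card]
    have hγle : γ ≤ Fintype.card (G ⧸ H) := by
      have : (γ : ℝ) < (Fintype.card (G ⧸ H) : ℝ) := by
        rw [← hidx]; linarith
      exact_mod_cast this.le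
    obtain ⟨T, -, hTcard⟩ := Finset.exists_subset_card_eq (s := (Finset.univ : Finset (G ⧸ H))) (n := γ)
      (by simpa using hγle)
    set A : G ⧸ H → Set X := fun q => q.out • S with hA
    have hm : ∀ q ∈ T, ε * N ≤ ((A q).ncard : ℝ) := fun q _ => (htrans q.out).ge
    have hK : ∀ q ∈ T, ∀ q' ∈ T, q ≠ q' → ((A q ∩ A q').ncard : ℝ) ≤ ε^4 * N := by
      intro q _ q' _ hne
      have hmem : q.out⁻¹ * q'.out ∉ H := by
        intro hmem
        exact hne (by rw [← q.out_eq, ← q'.out_eq]; exact QuotientGroup.eq.mpr hmem)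
      have := hyp q.out q'.out hmem
      rw [hcoe, hcoe] at this
      exact this.le
    have hbon := bonferroni A (ε * N) (ε^4 * N) T hm hK
    have hunion : ((⋃ q ∈ T, A q).ncard : ℝ) ≤ N := by
      have h : (⋃ q ∈ T, A q) ⊆ O := Set.iUnion₂_subset fun q _ => hsub q.out
      rw [hN]; exact_mod_cast Set.ncard_le_ncard h O.toFinite
    rw [hTcard] at hbon
    set c : ℝ := (γ : ℝ) with hc
    have hmain : c * (ε * N) - c * (c - 1) / 2 * (ε^4 * N) ≤ N := hbon.trans hunion
    have hdiv : c * ε - c * (c - 1) / 2 * ε^4 ≤ 1 := by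
      have h1 : (c * ε - c * (c - 1) / 2 * ε^4) * N ≤ 1 * N := by ring_nf; ring_nf at hmain; linarith
      exact le_of_mul_le_mul_right h1 hNpos
    have hcε1 : 2 ≤ c * ε := by
      rw [div_le_iff₀ hε0] at hγ1; linarith
    have hcε2 : c * ε ≤ 2 + ε := by
      have h := mul_le_mul_of_nonneg_right hγ2.le hε0.le
      have he : (2/ε + 1) * ε = 2 + ε := by field_simp
      rw [he] at h; exact h
    -- derive contradiction
    have key : c * (c - 1) * ε^4 = (c*ε) * ((c*ε) - ε) * ε^2 := by ring
    have hb1 : (c*ε) * ((c*ε) - ε) ≤ (2+ε) * 2 :=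
      mul_le_mul hcε2 (by linarith) (by linarith) (by linarith)
    have hb2 : c * (c-1) * ε^4 ≤ (4 + 2*ε) * ε^2 := by
      rw [key]
      have := mul_le_mul_of_nonneg_right hb1 (sq_nonneg ε)
      calc (c*ε) * ((c*ε) - ε) * ε^2 ≤ ((2+ε) * 2) * ε^2 := by
              simpa [sq] using this
        _ = (4 + 2*ε) * ε^2 := by ring
    have hp2 : ε^2 ≤ (11/20)^2 := pow_le_pow_left₀ hε0.le hcase 2
    have hp3 : ε^3 ≤ (11/20)^3 := pow_le_pow_left₀ hε0.le hcase 3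
    have hexp : (4 + 2*ε) * ε^2 = 4*ε^2 + 2*ε^3 := by ring
    rw [hexp] at hb2
    linarith [hdiv, hcε1, hb2, hp2, hp3]
  · -- large density case
    push_neg at hcase
    by_cases htop : H = ⊤
    · rw [htop, Subgroup.index_top]
      rw [le_div_iff₀ hε0]
      push_cast
      linarith
    · exfalso
      obtain ⟨g, hg⟩ : ∃ g, g ∉ H := by
        by_contra hall
        push_neg at hall
        exact htop (Subgroup.eq_top_iff' H |>.mpr hall)
      have h1 := hyp 1 g (by simpa using hg)
      rw [one_smul] at h1
      rw [hcoe, hcoe] at h1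
      have hlow : ε * N + ε * N - N ≤ ((S ∩ g • S).ncard : ℝ) := by
        have hie := Set.ncard_union_add_ncard_inter S (g • S)
        have hie' : ((S ∪ g • S).ncard : ℝ) + ((S ∩ g • S).ncard : ℝ)
            = (S.ncard : ℝ) + ((g • S).ncard : ℝ) := by exact_mod_cast hie
        have hsub2 : ((S ∪ g • S).ncard : ℝ) ≤ N := by
          have h : S ∪ g • S ⊆ O := Set.union_subset hS (hsub g)
          rw [hN]; exact_mod_cast Set.ncard_le_ncard h O.toFinite
        rw [hScard, htrans g] at hie'
        linarith
      have hup : ((S ∩ g • S).ncard : ℝ) < ε^4 * N := h1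
      have h2 : 2 * ε - 1 < ε^4 := by
        have h3 : (2*ε - 1) * N < ε^4 * N := by linarith
        exact lt_of_mul_lt_mul_right h3 hNpos.le
      -- but for ε > 11/20 we have ε^4 ≤ 2ε - 1
      have hpoly : 0 ≤ ε^3 + ε^2 + ε - 1 := by nlinarith [hcase, hε0]
      nlinarith [mul_nonneg (by linarith : (0:ℝ) ≤ 1 - ε) hpoly]
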